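/- Let k be an algebraically closed field whose characteristic is neither 2 nor 3, and let α in k satisfy α^2 + 11α - 1 = 0. Let F = (Y^2 - Z^2)(X + Y) + α(X^2 - Z^2)(Y - X) in k[X,Y,Z]. Then there is a unique y0 in k satisfying both y0^2 = y0 + 1 and 5·y0 + 3 + α = 0; and a nonzero triple (x,y,z) in k^3 is a common zero of F, ∂F/∂X, ∂F/∂Y, ∂F/∂Z if and only if (x,y,z) is a nonzero scalar multiple of (1, y0, 0). In particular, the cubic curve {F = 0} has exactly one singular point. -/

import Mathlib

open MvPolynomial

/-- The pencil of cubics `G_{s,t} = s(Y² - Z²)(X + Y) + t(X² - Z²)(Y - X)` in `k[X,Y,Z]`,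
with variables `X 0 = X`, `X 1 = Y`, `X 2 = Z`. -/
noncomputable def Gpencil (k : Type*) [CommRing k] (s t : k) : MvPolynomial (Fin 3) k :=
  C s * ((X 1) ^ 2 - (X 2) ^ 2) * (X 0 + X 1) + C t * ((X 0) ^ 2 - (X 2) ^ 2) * (X 1 - X 0)

lemma evalG {k : Type*} [CommRing k] (x y z α : k) :
    eval ![x, y, z] (Gpencil k 1 α) = (y^2 - z^2) * (x + y) + α * ((x^2 - z^2) * (y - x)) := by
  simp [Gpencil]; ring

lemma evalGx {k : Type*} [CommRing k] (x y z α : k) :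
    eval ![x, y, z] (pderiv 0 (Gpencil k 1 α))
      = (y^2 - z^2) + α * (2*x*(y - x) - (x^2 - z^2)) := by
  simp [Gpencil, pderiv_mul, pderiv_pow, pderiv_X_self, pderiv_X_of_ne]
  ring

lemma evalGy {k : Type*} [CommRing k] (x y z α : k) :
    eval ![x, y, z] (pderiv 1 (Gpencil k 1 α))
      = 2*y*(x + y) + (y^2 - z^2) + α * (x^2 - z^2) := by
  simp [Gpencil, pderiv_mul, pderiv_pow, pderiv_X_self, pderiv_X_of_ne]
  ring

lemma evalGz {k : Type*} [CommRing k] (x y z α : k) :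
    eval ![x, y, z] (pderiv 2 (Gpencil k 1 α))
      = -(2*z*(x + y)) - α * (2*z*(y - x)) := by
  simp [Gpencil, pderiv_mul, pderiv_pow, pderiv_X_self, pderiv_X_of_ne]
  ring

/-- Let `k` be an algebraically closed field of characteristic neither 2 nor 3, and let
`α ∈ k` satisfy `α² + 11α - 1 = 0`. Let `F = (Y² - Z²)(X + Y) + α(X² - Z²)(Y - X)`.
Then there is a unique `y0 ∈ k` with `y0² = y0 + 1` and `5y0 + 3 + α = 0`; and a nonzero
triple `(x,y,z)` is a common zero of `F` and its three partial derivatives if and only if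
`(x,y,z)` is a nonzero scalar multiple of `(1, y0, 0)`. -/
theorem stmt_2 (k : Type*) [Field k] [IsAlgClosed k]
    (h2 : ringChar k ≠ 2) (h3 : ringChar k ≠ 3)
    (α : k) (hα : α ^ 2 + 11 * α - 1 = 0) :
    (∃! y0 : k, y0 ^ 2 = y0 + 1 ∧ 5 * y0 + 3 + α = 0) ∧
    (∀ y0 : k, y0 ^ 2 = y0 + 1 → 5 * y0 + 3 + α = 0 →
      ∀ x y z : k, ¬(x = 0 ∧ y = 0 ∧ z = 0) →
        ((eval ![x, y, z] (Gpencil k 1 α) = 0 ∧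
          eval ![x, y, z] (pderiv 0 (Gpencil k 1 α)) = 0 ∧
          eval ![x, y, z] (pderiv 1 (Gpencil k 1 α)) = 0 ∧
          eval ![x, y, z] (pderiv 2 (Gpencil k 1 α)) = 0) ↔
         (∃ c : k, c ≠ 0 ∧ x = c * 1 ∧ y = c * y0 ∧ z = c * 0))) := by
  have h2' : (2 : k) ≠ 0 := fun h =>
    h2 (CharP.ringChar_of_prime_eq_zero Nat.prime_two (by exact_mod_cast h))
  have h3' : (3 : k) ≠ 0 := fun h =>
    h3 (CharP.ringChar_of_prime_eq_zero Nat.prime_three (by exact_mod_cast h))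
  have h6' : (6 : k) ≠ 0 := by
    have := mul_ne_zero h2' h3'; rwa [show (2:k)*3 = 6 by norm_num] at this
  have h24' : (24 : k) ≠ 0 := by
    have := mul_ne_zero (mul_ne_zero h2' h2') h6'
    rwa [show (2:k)*2*6 = 24 by norm_num] at this
  have hαne : α ≠ 0 := by
    intro h; rw [h] at hα; norm_num at hα
  -- uniqueness helper
  have uniq : ∀ a b : k, a^2 = a + 1 → 5*a + 3 + α = 0 → b^2 = b + 1 → 5*b + 3 + α = 0 →
      a = b := by
    intro a b ha ha' hb hb'
    by_cases h5 : (5 : k) = 0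
    · have ha3 : (a - 3)^2 = 0 := by linear_combination ha + (2 - a) * h5
      have hb3 : (b - 3)^2 = 0 := by linear_combination hb + (2 - b) * h5
      have ea := sub_eq_zero.mp (pow_eq_zero_iff two_ne_zero |>.mp ha3)
      have eb := sub_eq_zero.mp (pow_eq_zero_iff two_ne_zero |>.mp hb3)
      rw [ea, eb]
    · have h5ab : (5 : k) * (a - b) = 0 := by linear_combination ha' - hb'
      have := (mul_eq_zero.mp h5ab).resolve_left h5
      exact sub_eq_zero.mp this
  constructor
  · -- existence and uniqueness of y0
    by_cases h5 : (5 : k) = 0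
    · have hα3 : α = -3 := by
        have h : (α + 3)^2 = 0 := by linear_combination hα - (α - 2) * h5
        have := pow_eq_zero_iff two_ne_zero |>.mp h
        linear_combination this
      refine ⟨3, ⟨by linear_combination h5, by rw [hα3]; linear_combination 3 * h5⟩,
        fun y hy => uniq y 3 hy.1 hy.2 (by linear_combination h5)
          (by rw [hα3]; linear_combination 3 * h5)⟩
    · refine ⟨-(3 + α)/5, ⟨?_, ?_⟩, fun y hy => uniq y _ hy.1 hy.2 ?_ ?_⟩
      · field_simp
        ring_nf
        linear_combination hα
      · field_simp
        ring
      · field_simp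
        ring_nf
        linear_combination hα
      · field_simp
        ring
  · intro y0 hy0 hy0' x y z hxyz
    constructor
    · rintro ⟨e0, e1, e2, e3⟩
      rw [evalG] at e0; rw [evalGx] at e1; rw [evalGy] at e2; rw [evalGz] at e3
      have h30 : z * ((1 - α) * x + (1 + α) * y) = 0 := by
        have : (2 : k) * (z * ((1 - α) * x + (1 + α) * y)) = 0 := by linear_combination -e3
        exact (mul_eq_zero.mp this).resolve_left h2'
      have hz : z = 0 := by
        rcases mul_eq_zero.mp h30 with h | hL
        · exact h
        · have h24z : (24 : k) * z^2 = 0 := by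
            linear_combination (-74 - 7*α) * e1 + (40 + 3*α) * e2 +
              (-(42 + 4*α)*y - (26 + 2*α)*x) * hL +
              (10*z^2 + 4*y^2 + 12*x*y - 26*x^2) * hα
          have hz2 : z^2 = 0 := (mul_eq_zero.mp h24z).resolve_left h24'
          exact pow_eq_zero_iff two_ne_zero |>.mp hz2
      subst hz
      have hx : x ≠ 0 := by
        intro hx0
        subst hx0
        have hy2 : y^2 = 0 := by linear_combination e1
        exact hxyz ⟨rfl, pow_eq_zero_iff two_ne_zero |>.mp hy2, rfl⟩
      have hyne : y ≠ 0 := by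
        intro hy0z
        subst hy0z
        have : α * x^2 = 0 := by linear_combination e2
        rcases mul_eq_zero.mp this with h | h
        · exact hαne h
        · exact hx (pow_eq_zero_iff two_ne_zero |>.mp h)
      have key : (6 : k) * (x * y) * (y^2 - x*y - x^2) = 0 := by
        linear_combination (2*x*y - 3*x^2) * e2 - x^2 * e1
      have hfac : y^2 - x*y - x^2 = 0 := by
        rcases mul_eq_zero.mp key with h | h
        · exact absurd (mul_eq_zero.mp h) (by push_neg; exact ⟨h6', mul_ne_zero hx hyne⟩)
        · exact h
      have hA : 5*(x*y) + 3*x^2 + α*x^2 = 0 := by linear_combination e2 - 3 * hfac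
      have hkey : y = x * y0 := by
        by_cases h5 : (5 : k) = 0
        · have hyx : (y - 3*x)^2 = 0 := by linear_combination hfac + (2*x^2 - x*y) * h5
          have h1 : y = 3*x := by
            have := pow_eq_zero_iff two_ne_zero |>.mp hyx
            linear_combination this
          have hy03 : (y0 - 3)^2 = 0 := by linear_combination hy0 + (2 - y0) * h5
          have hh2 : y0 = 3 := by
            have := pow_eq_zero_iff two_ne_zero |>.mp hy03
            linear_combination this
          rw [h1, hh2]; ring
        · have h5x : (5 * x) * (y - x*y0) = 0 := by linear_combination hA - x^2 * hy0'
          have := (mul_eq_zero.mp h5x).resolve_left (mul_ne_zero h5 hx)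
          linear_combination this
      exact ⟨x, hx, by ring, hkey, by ring⟩
    · rintro ⟨c, hc, hx, hy, hz⟩
      subst hx; subst hy; subst hz
      rw [evalG, evalGx, evalGy, evalGz]
      refine ⟨?_, ?_, ?_, by ring⟩
      · linear_combination (c^3*(y0 - 1)) * hy0' + (c^3*(y0 - 3)) * hy0
      · linear_combination (c^2*(2*y0 - 3)) * hy0' - (9*c^2) * hy0
      · linear_combination c^2 * hy0' + (3*c^2) * hy0
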